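/- Let c > 0 and let (A_n) be a sequence of nonnegative real numbers satisfying A_n ≤ c·ln n + (6/(n(n-1))) · Σ_{k=0}^{n-2} (n-k-1)·A_k for all n ≥ 2 (with A_0, A_1 arbitrary fixed nonnegative reals). Then A_n = O(n); more precisely, for D ≥ c/5 there exist constants C and n_0 such that A_n ≤ C·n − D·ln n for all n ≥ n_0. -/

import Mathlib

lemma dpq_gauss (m : ℕ) : ∑ k ∈ Finset.range m, (k : ℝ) = m * (m - 1) / 2 := by
  induction m with
  | zero => simp
  | succ m ih => rw [Finset.sum_range_succ, ih]; push_cast; ring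

lemma dpq_sumwk (m : ℕ) :
    ∑ k ∈ Finset.range m, ((m : ℝ) - k) * k = (m + 1) * m * (m - 1) / 6 := by
  induction m with
  | zero => simp
  | succ m ih =>
    have step : ∑ k ∈ Finset.range (m + 1), (((m + 1 : ℕ) : ℝ) - k) * k
        = (∑ k ∈ Finset.range m, (((m : ℝ) - k) * k + k)) + m := by
      rw [Finset.sum_range_succ]
      push_cast
      rw [Finset.sum_congr rfl (fun k _ => by ring :
        ∀ k ∈ Finset.range m, ((m : ℝ) + 1 - k) * k = ((m : ℝ) - k) * k + k)]
      ring
    rw [step, Finset.sum_add_distrib, ih, dpq_gauss]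
    push_cast; ring


lemma dpq_Tlb (n : ℕ) (hn : 32 ≤ n) :
    11 / 60 * ((n : ℝ) * ((n : ℝ) - 1)) * (Real.log n - Real.log 16) ≤
    ∑ k ∈ Finset.range (n - 1), (((n : ℝ) - k - 1) * Real.log k) := by
  set m := n / 16 + 1 with hm
  set M := n / 2 with hM
  have hnR : (32 : ℝ) ≤ n := by exact_mod_cast hn
  have hL : 0 ≤ Real.log n - Real.log 16 := by
    have : Real.log 16 ≤ Real.log n := by
      apply Real.log_le_log (by norm_num)
      exact_mod_cast le_trans (by norm_num) hn
    linarith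
  have hsub : Finset.Ico m M ⊆ Finset.range (n - 1) := by
    intro k hk
    simp only [Finset.mem_Ico, Finset.mem_range] at *
    omega
  have hterm : ∀ k ∈ Finset.Ico m M,
      (n : ℝ) / 2 * (Real.log n - Real.log 16) ≤ ((n : ℝ) - k - 1) * Real.log k := by
    intro k hk
    simp only [Finset.mem_Ico] at hk
    have hw : (n : ℝ) / 2 ≤ (n : ℝ) - k - 1 := by
      have h1 : 2 * (k + 1) ≤ 2 * M := by omega
      have h2 : 2 * M ≤ n := by omega
      have : (2 : ℝ) * ((k : ℝ) + 1) ≤ n := by exact_mod_cast le_trans h1 h2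
      linarith
    have hk16 : (n : ℝ) / 16 ≤ k := by
      have h1 : n ≤ 16 * k := by omega
      have : (n : ℝ) ≤ 16 * k := by exact_mod_cast h1
      linarith
    have hlogk : Real.log n - Real.log 16 ≤ Real.log k := by
      have h0 : (0 : ℝ) < (n : ℝ) / 16 := by linarith
      have := Real.log_le_log h0 hk16
      rw [Real.log_div (by linarith : (n : ℝ) ≠ 0) (by norm_num : (16 : ℝ) ≠ 0)] at this
      linarith
    exact mul_le_mul hw hlogk hL (by linarith)
  have hcard := Finset.card_nsmul_le_sum (Finset.Ico m M)
    (fun k => ((n : ℝ) - k - 1) * Real.log k)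
    ((n : ℝ) / 2 * (Real.log n - Real.log 16)) hterm
  rw [Nat.card_Ico, nsmul_eq_mul] at hcard
  have hnonneg : ∀ k ∈ Finset.range (n - 1), k ∉ Finset.Ico m M →
      0 ≤ ((n : ℝ) - k - 1) * Real.log k := by
    intro k hk _
    simp only [Finset.mem_range] at hk
    apply mul_nonneg _ (Real.log_natCast_nonneg k)
    have : (k : ℝ) + 1 ≤ (n : ℝ) - 1 := by
      have : k + 2 ≤ n := by omega
      have := (Nat.cast_le (α := ℝ)).2 this
      push_cast at this; linarith
    linarith
  have hmono := Finset.sum_le_sum_of_subset_of_nonneg hsub hnonneg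
  have hcount : (7 * (n : ℝ) - 24) / 16 ≤ ((M - m : ℕ) : ℝ) := by
    have h1 : 7 * n ≤ 16 * (M - m) + 24 := by omega
    have : (7 * (n : ℝ)) ≤ 16 * ((M - m : ℕ) : ℝ) + 24 := by exact_mod_cast h1
    linarith
  calc 11 / 60 * ((n : ℝ) * ((n : ℝ) - 1)) * (Real.log n - Real.log 16)
      ≤ ((M - m : ℕ) : ℝ) * ((n : ℝ) / 2 * (Real.log n - Real.log 16)) := by
        have hstep : 11 / 60 * ((n : ℝ) * ((n : ℝ) - 1)) ≤ ((M - m : ℕ) : ℝ) * ((n : ℝ) / 2) := by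
          nlinarith [hcount, hnR]
        have := mul_le_mul_of_nonneg_right hstep hL
        calc 11 / 60 * ((n : ℝ) * ((n : ℝ) - 1)) * (Real.log n - Real.log 16)
            ≤ ((M - m : ℕ) : ℝ) * ((n : ℝ) / 2) * (Real.log n - Real.log 16) := this
          _ = _ := by ring
    _ ≤ ∑ k ∈ Finset.Ico m M, (((n : ℝ) - k - 1) * Real.log k) := hcard
    _ ≤ _ := hmono


/-- Logarithmic per-partitioning error terms in the dual pivot quicksort recurrence
contribute only `O(n)` to the total average sorting cost: if the nonnegative sequence
`A` satisfies `A n ≤ c·ln n + (6/(n(n-1)))·Σ_{k=0}^{n-2}(n-k-1)·A k` for all `n ≥ 2`,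
then `A n = O(n)`; more precisely, for every `D ≥ c/5` there are constants `C` and `n₀`
with `A n ≤ C·n − D·ln n` for all `n ≥ n₀`. -/
theorem dual_pivot_log_error_terms (c : ℝ) (hc : 0 < c) (A : ℕ → ℝ)
    (hA : ∀ n : ℕ, 0 ≤ A n)
    (hrec : ∀ n : ℕ, 2 ≤ n →
      A n ≤ c * Real.log n + 6 / ((n : ℝ) * ((n : ℝ) - 1)) *
        ∑ k ∈ Finset.range (n - 1), (((n : ℝ) - (k : ℝ) - 1) * A k)) :
    (∃ K : ℝ, ∀ n : ℕ, 1 ≤ n → A n ≤ K * n) ∧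
    ∀ D : ℝ, c / 5 ≤ D → ∃ C : ℝ, ∃ n₀ : ℕ, ∀ n : ℕ, n₀ ≤ n →
      A n ≤ C * n - D * Real.log n := by
  obtain ⟨K, hK⟩ : ∃ K : ℝ, K = (3 * A 0 + 11 * c * Real.log 16) / 2
      + 10 * c * Real.log 32 + ∑ j ∈ Finset.range 32, A j := ⟨_, rfl⟩
  have hlog16 : (0 : ℝ) ≤ Real.log 16 := Real.log_nonneg (by norm_num)
  have hlog32 : (0 : ℝ) ≤ Real.log 32 := Real.log_nonneg (by norm_num)
  have hsum32 : (0 : ℝ) ≤ ∑ j ∈ Finset.range 32, A j :=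
    Finset.sum_nonneg (fun j _ => hA j)
  have hK2 : 3 * A 0 + 11 * c * Real.log 16 ≤ 2 * K := by
    have : 0 ≤ 10 * c * Real.log 32 := by positivity
    rw [hK]; linarith
  have hK0 : 0 ≤ K := by
    have h1 : 0 ≤ 3 * A 0 + 11 * c * Real.log 16 := by
      have := hA 0; positivity
    have : 0 ≤ 10 * c * Real.log 32 := by positivity
    rw [hK]; linarith
  -- main induction
  have key : ∀ n : ℕ, 1 ≤ n → A n ≤ K * n - 10 * c * Real.log n := by
    intro n
    induction n using Nat.strong_induction_on with
    | _ n ih =>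
      intro hn1
      by_cases hlt : n < 32
      · -- base case
        have hAle : A n ≤ ∑ j ∈ Finset.range 32, A j :=
          Finset.single_le_sum (fun j _ => hA j) (Finset.mem_range.2 hlt)
        have hlogle : Real.log n ≤ Real.log 32 := by
          apply Real.log_le_log (by exact_mod_cast hn1)
          exact_mod_cast hlt.le
        have hKle : K * 1 ≤ K * n := by
          apply mul_le_mul_of_nonneg_left _ hK0
          exact_mod_cast hn1
        have h1 : 0 ≤ (3 * A 0 + 11 * c * Real.log 16) / 2 := by
          have := hA 0; positivity
        linarith [mul_le_mul_of_nonneg_left hlogle (by linarith : (0:ℝ) ≤ 10 * c)]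
      · -- inductive step
        push_neg at hlt
        have h2n : 2 ≤ n := by omega
        have hnR : (32 : ℝ) ≤ n := by exact_mod_cast hlt
        have hd : (0 : ℝ) < (n : ℝ) * ((n : ℝ) - 1) := by nlinarith
        obtain ⟨T, hT⟩ : ∃ T : ℝ,
            T = ∑ k ∈ Finset.range (n - 1), (((n : ℝ) - k - 1) * Real.log k) := ⟨_, rfl⟩
        -- bound each summand
        have hSle : ∑ k ∈ Finset.range (n - 1), (((n : ℝ) - (k : ℝ) - 1) * A k)
            ≤ A 0 * ((n : ℝ) - 1)
              + K * ((n : ℝ) * ((n : ℝ) - 1) * ((n : ℝ) - 2) / 6) - 10 * c * T := by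
          rw [hT]
          have hterm : ∀ k ∈ Finset.range (n - 1),
              ((n : ℝ) - (k : ℝ) - 1) * A k ≤
              A 0 * (if k = 0 then (n : ℝ) - (k : ℝ) - 1 else 0)
                + K * (((n : ℝ) - (k : ℝ) - 1) * k)
                - 10 * c * (((n : ℝ) - (k : ℝ) - 1) * Real.log k) := by
            intro k hk
            simp only [Finset.mem_range] at hk
            have hw : (0 : ℝ) ≤ (n : ℝ) - k - 1 := by
              have : (k : ℝ) + 2 ≤ n := by exact_mod_cast (by omega : k + 2 ≤ n)
              linarith
            rcases Nat.eq_zero_or_pos k with hk0 | hk1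
            · subst hk0
              simp only [if_pos rfl, if_true, eq_self_iff_true, Nat.cast_zero,
                Real.log_zero, mul_zero, sub_zero]
              nlinarith [hA 0]
            · have hAk := ih k (by omega) (by omega)
              rw [if_neg (by omega)]
              have := mul_le_mul_of_nonneg_left hAk hw
              nlinarith [this]
          have := Finset.sum_le_sum hterm
          rw [Finset.sum_sub_distrib, Finset.sum_add_distrib, ← Finset.mul_sum,
            ← Finset.mul_sum, ← Finset.mul_sum] at this
          have hif : ∑ k ∈ Finset.range (n - 1),
              (if k = 0 then (n : ℝ) - (k : ℝ) - 1 else 0) = (n : ℝ) - 1 := by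
            rw [Finset.sum_ite_eq' (Finset.range (n - 1)) 0
              (fun k => (n : ℝ) - (k : ℝ) - 1)]
            rw [if_pos (Finset.mem_range.2 (by omega))]
            simp
          have hwk : ∑ k ∈ Finset.range (n - 1), (((n : ℝ) - (k : ℝ) - 1) * k)
              = (n : ℝ) * ((n : ℝ) - 1) * ((n : ℝ) - 2) / 6 := by
            have hcast : ((n - 1 : ℕ) : ℝ) = (n : ℝ) - 1 := by
              have : 1 ≤ n := by omega
              push_cast [this]; ring
            have := dpq_sumwk (n - 1)
            rw [hcast] at this
            calc ∑ k ∈ Finset.range (n - 1), (((n : ℝ) - (k : ℝ) - 1) * k)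
                = ∑ k ∈ Finset.range (n - 1), (((n : ℝ) - 1 - k) * k) :=
                  Finset.sum_congr rfl (fun k _ => by ring)
              _ = ((n : ℝ) - 1 + 1) * ((n : ℝ) - 1) * ((n : ℝ) - 1 - 1) / 6 := this
              _ = (n : ℝ) * ((n : ℝ) - 1) * ((n : ℝ) - 2) / 6 := by ring
          rw [hif, hwk] at this
          exact this
        -- combine
        have hArec := hrec n h2n
        have h6d : (0 : ℝ) ≤ 6 / ((n : ℝ) * ((n : ℝ) - 1)) := by positivity
        have hmul := mul_le_mul_of_nonneg_left hSle h6d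
        have hTlb := dpq_Tlb n hlt
        rw [← hT] at hTlb
        have hx1 : 6 / ((n : ℝ) * ((n : ℝ) - 1)) * (A 0 * ((n : ℝ) - 1)) ≤ 3 * A 0 := by
          rw [div_mul_eq_mul_div, div_le_iff₀ hd]
          nlinarith [mul_nonneg (hA 0) (mul_nonneg
            (by linarith : (0:ℝ) ≤ (n:ℝ) - 1) (by linarith : (0:ℝ) ≤ (n:ℝ) - 2))]
        have hx2 : 6 / ((n : ℝ) * ((n : ℝ) - 1))
            * (K * ((n : ℝ) * ((n : ℝ) - 1) * ((n : ℝ) - 2) / 6)) = K * ((n : ℝ) - 2) := by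
          rw [div_mul_eq_mul_div, div_eq_iff hd.ne']
          ring
        have hx3 : 11 * c * (Real.log n - Real.log 16)
            ≤ 6 / ((n : ℝ) * ((n : ℝ) - 1)) * (10 * c * T) := by
          have h1 : 10 * c * (11 / 60 * ((n : ℝ) * ((n : ℝ) - 1))
              * (Real.log n - Real.log 16)) ≤ 10 * c * T :=
            mul_le_mul_of_nonneg_left hTlb (by linarith)
          have h2 := mul_le_mul_of_nonneg_left h1 h6d
          have h3 : 6 / ((n : ℝ) * ((n : ℝ) - 1)) * (10 * c * (11 / 60
              * ((n : ℝ) * ((n : ℝ) - 1)) * (Real.log n - Real.log 16)))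
              = 11 * c * (Real.log n - Real.log 16) := by
            rw [div_mul_eq_mul_div, div_eq_iff hd.ne']
            ring
          linarith [h2, h3.symm.le]
        have hexp : 6 / ((n : ℝ) * ((n : ℝ) - 1)) * (A 0 * ((n : ℝ) - 1)
              + K * ((n : ℝ) * ((n : ℝ) - 1) * ((n : ℝ) - 2) / 6) - 10 * c * T)
            = 6 / ((n : ℝ) * ((n : ℝ) - 1)) * (A 0 * ((n : ℝ) - 1))
              + 6 / ((n : ℝ) * ((n : ℝ) - 1))
                * (K * ((n : ℝ) * ((n : ℝ) - 1) * ((n : ℝ) - 2) / 6))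
              - 6 / ((n : ℝ) * ((n : ℝ) - 1)) * (10 * c * T) := by ring
        rw [hexp, hx2] at hmul
        linarith [hArec, hmul, hx1, hx3, hK2]
  constructor
  · refine ⟨K, fun n hn => ?_⟩
    have hlogn : 0 ≤ Real.log n := Real.log_natCast_nonneg n
    have := key n hn
    nlinarith
  · intro D hD
    refine ⟨K + D, 1, fun n hn => ?_⟩
    have hlogn : Real.log n ≤ n := by
      calc Real.log n ≤ (n : ℝ) - 1 :=
        Real.log_le_sub_one_of_pos (by exact_mod_cast hn)
      _ ≤ n := by linarith
    have hD0 : 0 < D := lt_of_lt_of_le (by linarith) hD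
    have h1 := key n hn
    have hlogn0 : 0 ≤ Real.log n := Real.log_natCast_nonneg n
    nlinarith
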